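/- arXiv:1502.03636 — 4 statements merged into one kernel-verified Lean document; each statement's English description precedes it below -/
import Mathlib

section
/- Distributivity over disjunction holds up to ready simulation equivalence: for each ⊙ ∈ {□, ∥_A, ∧} and all processes p₁, p₂, p₃ of the recursion-free calculus CLL, p₁ ⊙ (p₂ ∨ p₃) =_RS (p₁ ⊙ p₂) ∨ (p₁ ⊙ p₃). -/
open Classical

/-- Visible actions plus the invisible action τ. -/
inductive ActT (Act : Type) : Type where
  | act : Act → ActT Act
  | tau : ActT Act

/-- Processes of the recursion-free calculus CLL. -/
inductive Proc (Act : Type) : Type where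
  | nil  : Proc Act                                -- 0
  | bot  : Proc Act                                -- ⊥
  | pre  : ActT Act → Proc Act → Proc Act          -- α.t
  | ec   : Proc Act → Proc Act → Proc Act          -- t □ t
  | conj : Proc Act → Proc Act → Proc Act          -- t ∧ t
  | disj : Proc Act → Proc Act → Proc Act          -- t ∨ t
  | par  : Set Act → Proc Act → Proc Act → Proc Act -- t ∥_A t

namespace Proc

variable {Act : Type}

/-- Whether a process has a τ-transition (structural stratification used for
the negative premises of the SOS rules). -/
def hasTau : Proc Act → Prop
  | nil => False
  | bot => False
  | pre a _ => a = ActT.tau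
  | ec t₁ t₂ => hasTau t₁ ∨ hasTau t₂
  | conj t₁ t₂ => hasTau t₁ ∨ hasTau t₂
  | disj _ _ => True
  | par _ t₁ t₂ => hasTau t₁ ∨ hasTau t₂

/-- The transition relation, given by the SOS rules of CLL_R. -/
inductive Trans : Proc Act → ActT Act → Proc Act → Prop where
  | pre : Trans (pre α t) α t
  | ecL : Trans t₁ (ActT.act a) t₁' → ¬ hasTau t₂ →
      Trans (ec t₁ t₂) (ActT.act a) t₁'
  | ecR : ¬ hasTau t₁ → Trans t₂ (ActT.act a) t₂' →
      Trans (ec t₁ t₂) (ActT.act a) t₂'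
  | ecTauL : Trans t₁ ActT.tau t₁' → Trans (ec t₁ t₂) ActT.tau (ec t₁' t₂)
  | ecTauR : Trans t₂ ActT.tau t₂' → Trans (ec t₁ t₂) ActT.tau (ec t₁ t₂')
  | conjAct : Trans t₁ (ActT.act a) t₁' → Trans t₂ (ActT.act a) t₂' →
      Trans (conj t₁ t₂) (ActT.act a) (conj t₁' t₂')
  | conjTauL : Trans t₁ ActT.tau t₁' → Trans (conj t₁ t₂) ActT.tau (conj t₁' t₂)
  | conjTauR : Trans t₂ ActT.tau t₂' → Trans (conj t₁ t₂) ActT.tau (conj t₁ t₂')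
  | disjL : Trans (disj t₁ t₂) ActT.tau t₁
  | disjR : Trans (disj t₁ t₂) ActT.tau t₂
  | parTauL : Trans t₁ ActT.tau t₁' → Trans (par A t₁ t₂) ActT.tau (par A t₁' t₂)
  | parTauR : Trans t₂ ActT.tau t₂' → Trans (par A t₁ t₂) ActT.tau (par A t₁ t₂')
  | parL : a ∉ A → Trans t₁ (ActT.act a) t₁' → ¬ hasTau t₂ →
      Trans (par A t₁ t₂) (ActT.act a) (par A t₁' t₂)
  | parR : a ∉ A → ¬ hasTau t₁ → Trans t₂ (ActT.act a) t₂' →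
      Trans (par A t₁ t₂) (ActT.act a) (par A t₁ t₂')
  | parSync : a ∈ A → Trans t₁ (ActT.act a) t₁' → Trans t₂ (ActT.act a) t₂' →
      Trans (par A t₁ t₂) (ActT.act a) (par A t₁' t₂')

/-- The ready set I(p). -/
def ready (p : Proc Act) : Set (ActT Act) := {α | ∃ q, Trans p α q}

/-- p is stable if it has no τ-transition. -/
def Stable (p : Proc Act) : Prop := ∀ q, ¬ Trans p ActT.tau q

/-- The inconsistency predicate F, as the least predicate closed under the
predicative rules of CLL_R. -/
inductive Fp : Proc Act → Prop where
  | bot : Fp bot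
  | pre : Fp t → Fp (pre α t)
  | disj : Fp t₁ → Fp t₂ → Fp (disj t₁ t₂)
  | ecL : Fp t₁ → Fp (ec t₁ t₂)
  | ecR : Fp t₂ → Fp (ec t₁ t₂)
  | parL : Fp t₁ → Fp (par A t₁ t₂)
  | parR : Fp t₂ → Fp (par A t₁ t₂)
  | conjL : Fp t₁ → Fp (conj t₁ t₂)
  | conjR : Fp t₂ → Fp (conj t₁ t₂)
  | conjReady : Stable (conj t₁ t₂) → ready t₁ ≠ ready t₂ → Fp (conj t₁ t₂)
  | conjSucc : Trans (conj t₁ t₂) α s → (∀ y, Trans (conj t₁ t₂) α y → Fp y) →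
      Fp (conj t₁ t₂)
  | conjStable :
      (∀ y, Relation.ReflTransGen (fun x z => Trans x ActT.tau z) (conj t₁ t₂) y →
        Stable y → Fp y) →
      Fp (conj t₁ t₂)

/-- One τ-step with both endpoints consistent. -/
def tauStepF (p q : Proc Act) : Prop := Trans p ActT.tau q ∧ ¬ Fp p ∧ ¬ Fp q

/-- p ⇒_F| q : a sequence of τ-transitions from p to q, all states outside F,
with q stable. -/
def epsF (p q : Proc Act) : Prop :=
  Relation.ReflTransGen tauStepF p q ∧ ¬ Fp p ∧ ¬ Fp q ∧ Stable q

/-- p =a⇒_F| q. -/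
def wkF (a : Act) (p q : Proc Act) : Prop :=
  ∃ r s, Relation.ReflTransGen tauStepF p r ∧ ¬ Fp p ∧ ¬ Fp r ∧
    Trans r (ActT.act a) s ∧ ¬ Fp s ∧
    Relation.ReflTransGen tauStepF s q ∧ ¬ Fp q ∧ Stable q

/-- R is a stable ready simulation. -/
def StableRS (R : Proc Act → Proc Act → Prop) : Prop :=
  ∀ p q, R p q →
    Stable p ∧ Stable q ∧
    (¬ Fp p → ¬ Fp q) ∧
    (∀ a p', wkF a p p' → ∃ q', wkF a q q' ∧ R p' q') ∧
    (¬ Fp p → ready p = ready q)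

/-- p ⊏̃_RS q. -/
def rsLT (p q : Proc Act) : Prop := ∃ R, StableRS R ∧ R p q

/-- p ⊑_RS q. -/
def rsLE (p q : Proc Act) : Prop :=
  ∀ p', epsF p p' → ∃ q', epsF q q' ∧ rsLT p' q'

/-- p =_RS q. -/
def rsEq (p q : Proc Act) : Prop := rsLE p q ∧ rsLE q p

/-- Basic process terms T(Σ_B): no ⊥ and no ∧. -/
inductive Basic : Proc Act → Prop where
  | nil : Basic nil
  | pre : Basic t → Basic (pre α t)
  | disj : Basic t₁ → Basic t₂ → Basic (disj t₁ t₂)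
  | ec : Basic t₁ → Basic t₂ → Basic (ec t₁ t₂)
  | par : Basic t₁ → Basic t₂ → Basic (par A t₁ t₂)

/-- General external choice □ over a finite sequence (left-nested). -/
def ecList : List (Proc Act) → Proc Act
  | [] => nil
  | t :: ts => ts.foldl ec t

/-- General disjunction ⋁ over a nonempty finite sequence (left-nested). -/
def djList : List (Proc Act) → Proc Act
  | [] => bot
  | t :: ts => ts.foldl disj t

/-- □_{i<n} a_i.t_i for a sequence of prefixed terms. -/
def ecPre (l : List (Act × Proc Act)) : Proc Act :=
  ecList (l.map fun x => pre (ActT.act x.1) x.2)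

/-- The expansion term E = ((□Ω₁) □ (□Ω₂)) □ (□Ω₃). -/
noncomputable def expTerm (A : Set Act) (l₁ l₂ : List (Act × Proc Act)) : Proc Act :=
  ec (ec
      (ecList ((l₁.filter fun x => decide (x.1 ∉ A)).map
        fun x => pre (ActT.act x.1) (par A x.2 (ecPre l₂))))
      (ecList ((l₂.filter fun x => decide (x.1 ∉ A)).map
        fun x => pre (ActT.act x.1) (par A (ecPre l₁) x.2))))
    (ecList (l₁.flatMap fun x =>
      (l₂.filter fun y => decide (y.1 = x.1 ∧ x.1 ∈ A)).map
        fun y => pre (ActT.act x.1) (par A x.2 y.2)))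

/-- Normal forms NF_B. -/
inductive NFB : Proc Act → Prop where
  | mk (ls : List (List (Act × Proc Act))) (hne : ls ≠ [])
      (hnodup : ∀ l ∈ ls, (l.map Prod.fst).Nodup)
      (hsub : ∀ l ∈ ls, ∀ x ∈ l, NFB x.2) :
      NFB (djList (ls.map ecPre))

/-- NF = NF_B ∪ {⊥}. -/
def NF (p : Proc Act) : Prop := NFB p ∨ p = bot

/-- Derivability ⊢ t ≤ t' in the proof system AX_CLL. -/
inductive Deriv : Proc Act → Proc Act → Prop where
  | refl (t) : Deriv t t
  | trans : Deriv t t' → Deriv t' t'' → Deriv t t''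
  | mono_pre : Deriv t t' → Deriv (pre α t) (pre α t')
  | mono_ec : Deriv s s' → Deriv t t' → Deriv (ec s t) (ec s' t')
  | mono_conj : Deriv s s' → Deriv t t' → Deriv (conj s t) (conj s' t')
  | mono_disj : Deriv s s' → Deriv t t' → Deriv (disj s t) (disj s' t')
  | mono_par : Deriv s s' → Deriv t t' → Deriv (par A s t) (par A s' t')
  -- external choice
  | ec_comm : Deriv (ec x y) (ec y x)
  | ec_assoc₁ : Deriv (ec (ec x y) z) (ec x (ec y z))
  | ec_assoc₂ : Deriv (ec x (ec y z)) (ec (ec x y) z)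
  | ec_idem₁ : Deriv (ec x x) x
  | ec_idem₂ : Deriv x (ec x x)
  | ec_nil₁ : Deriv (ec x nil) x
  | ec_nil₂ : Deriv x (ec x nil)
  | ec_bot₁ : Deriv (ec x bot) bot
  | ec_bot₂ : Deriv bot (ec x bot)
  -- disjunction
  | disj_comm : Deriv (disj x y) (disj y x)
  | disj_assoc₁ : Deriv (disj x (disj y z)) (disj (disj x y) z)
  | disj_assoc₂ : Deriv (disj (disj x y) z) (disj x (disj y z))
  | disj_idem₁ : Deriv (disj x x) x
  | disj_idem₂ : Deriv x (disj x x)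
  | disj_bot₁ : Deriv (disj x bot) x
  | disj_bot₂ : Deriv x (disj x bot)
  | disj_le : Deriv x (disj x y)
  -- conjunction
  | conj_comm : Deriv (conj x y) (conj y x)
  | conj_idem₁ : Deriv (conj x x) x
  | conj_idem₂ : Deriv x (conj x x)
  | conj_bot₁ : Deriv (conj x bot) bot
  | conj_bot₂ : Deriv bot (conj x bot)
  -- prefixing
  | pre_bot₁ : Deriv (pre (ActT.act a) bot) bot
  | pre_bot₂ : Deriv bot (pre (ActT.act a) bot)
  | tau_pre₁ : Deriv (pre ActT.tau x) x
  | tau_pre₂ : Deriv x (pre ActT.tau x)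
  -- parallel
  | par_comm : Deriv (par A x y) (par A y x)
  | par_bot₁ : Deriv (par A x bot) bot
  | par_bot₂ : Deriv bot (par A x bot)
  -- distribution over disjunction
  | ds_ec : Deriv (ec x (disj y z)) (disj (ec x y) (ec x z))
  | ds_conj : Deriv (conj x (disj y z)) (disj (conj x y) (conj x z))
  | ds_par : Deriv (par A x (disj y z)) (disj (par A x y) (par A x z))
  | ds_pre : Basic x → Basic y →
      Deriv (pre (ActT.act a) (disj x y)) (ec (pre (ActT.act a) x) (pre (ActT.act a) y))
  -- external choice and conjunction
  | ecc1₁ (l₁ l₂ : List (Act × Proc Act)) :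
      {a | a ∈ l₁.map Prod.fst} ≠ {a | a ∈ l₂.map Prod.fst} →
      Deriv (conj (ecPre l₁) (ecPre l₂)) bot
  | ecc1₂ (l₁ l₂ : List (Act × Proc Act)) :
      {a | a ∈ l₁.map Prod.fst} ≠ {a | a ∈ l₂.map Prod.fst} →
      Deriv bot (conj (ecPre l₁) (ecPre l₂))
  | ecc2 (l : List (Act × Proc Act × Proc Act)) :
      Deriv (ecPre (l.map fun x => (x.1, conj x.2.1 x.2.2)))
            (conj (ecPre (l.map fun x => (x.1, x.2.1)))
                  (ecPre (l.map fun x => (x.1, x.2.2))))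
  | ecc3 (l : List (Act × Proc Act × Proc Act)) :
      (l.map Prod.fst).Nodup →
      Deriv (conj (ecPre (l.map fun x => (x.1, x.2.1)))
                  (ecPre (l.map fun x => (x.1, x.2.2))))
            (ecPre (l.map fun x => (x.1, conj x.2.1 x.2.2)))
  -- expansion
  | exp1 (A : Set Act) (l₁ l₂ : List (Act × Proc Act)) :
      Deriv (par A (ecPre l₁) (ecPre l₂)) (expTerm A l₁ l₂)
  | exp2 (A : Set Act) (l₁ l₂ : List (Act × Proc Act)) :
      (∀ x ∈ l₁, Basic x.2) → (∀ x ∈ l₂, Basic x.2) →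
      Deriv (expTerm A l₁ l₂) (par A (ecPre l₁) (ecPre l₂))

end Proc

namespace Proc

variable {Act : Type}

lemma hasTau_of_tau {t : Proc Act} {α u} (h : Trans t α u) (hα : α = ActT.tau) :
    hasTau t := by
  induction h <;> simp_all [hasTau]

lemma noAct {t : Proc Act} {α u} (h : Trans t α u) (hα : α ≠ ActT.tau)
    (ht : hasTau t) : False := by
  induction h <;> simp_all [hasTau]

lemma noActTau {t u v : Proc Act} {a : Act} (h1 : Trans t ActT.tau u)
    (h2 : Trans t (ActT.act a) v) : False :=
  noAct h2 (by simp) (hasTau_of_tau h1 rfl)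

lemma Fp_ec_iff {a b : Proc Act} : Fp (ec a b) ↔ Fp a ∨ Fp b := by
  constructor
  · intro h
    cases h with
    | ecL h => exact Or.inl h
    | ecR h => exact Or.inr h
  · rintro (h | h)
    exacts [Fp.ecL h, Fp.ecR h]

lemma Fp_par_iff {A : Set Act} {a b : Proc Act} : Fp (par A a b) ↔ Fp a ∨ Fp b := by
  constructor
  · intro h
    cases h with
    | parL h => exact Or.inl h
    | parR h => exact Or.inr h
  · rintro (h | h)
    exacts [Fp.parL h, Fp.parR h]

lemma Fp_disj_iff {a b : Proc Act} : Fp (disj a b) ↔ Fp a ∧ Fp b := by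
  constructor
  · intro h
    cases h with
    | disj h1 h2 => exact ⟨h1, h2⟩
  · rintro ⟨h1, h2⟩
    exact Fp.disj h1 h2

lemma plainChain {a b : Proc Act}
    (h : Relation.ReflTransGen tauStepF a b) :
    Relation.ReflTransGen (fun x z => Trans x ActT.tau z) a b :=
  Relation.ReflTransGen.mono (r := tauStepF) (p := fun x z => Trans x ActT.tau z)
    (fun _ _ hh => hh.1) a b h

lemma rsLT_refl {p : Proc Act} (h : Stable p) : rsLT p p := by
  refine ⟨fun x y => x = y ∧ Stable x, ?_, rfl, h⟩
  rintro a b ⟨rfl, hst⟩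
  refine ⟨hst, hst, fun hf => hf, ?_, fun _ => rfl⟩
  intro a' p' hw
  obtain ⟨r, s, _, _, _, _, _, _, _, hst'⟩ := hw
  exact ⟨p', ⟨r, s, by assumption, by assumption, by assumption, by assumption,
    by assumption, by assumption, by assumption, hst'⟩, rfl, hst'⟩

lemma rsLE_of_forall {p q : Proc Act} (h : ∀ p', epsF p p' → epsF q p') :
    rsLE p q := by
  intro p' hp
  exact ⟨p', h p' hp, rsLT_refl hp.2.2.2⟩

lemma ec_chain {p₂ p₃ p' : Proc Act} (hs : Stable p') :
    ∀ {u}, Relation.ReflTransGen tauStepF u p' → ∀ x, u = ec x (disj p₂ p₃) →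
      (Relation.ReflTransGen tauStepF (ec x p₂) p' ∧ ¬ Fp (ec x p₂)) ∨
      (Relation.ReflTransGen tauStepF (ec x p₃) p' ∧ ¬ Fp (ec x p₃)) := by
  intro u h
  induction h using Relation.ReflTransGen.head_induction_on with
  | refl =>
    intro x hx
    subst hx
    exact absurd (Trans.ecTauR Trans.disjL) (hs _)
  | head st hcb ih =>
    intro x hx
    subst hx
    obtain ⟨htr, hfu, hfc⟩ := st
    cases htr with
    | ecTauL hx' =>
      rcases ih _ rfl with ⟨ch, hf⟩ | ⟨ch, hf⟩
      · have hfx : ¬ Fp (ec x p₂) := by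
          intro hF
          rcases Fp_ec_iff.1 hF with h | h
          · exact hfu (Fp.ecL h)
          · exact hf (Fp.ecR h)
        exact Or.inl ⟨ch.head ⟨Trans.ecTauL hx', hfx, hf⟩, hfx⟩
      · have hfx : ¬ Fp (ec x p₃) := by
          intro hF
          rcases Fp_ec_iff.1 hF with h | h
          · exact hfu (Fp.ecL h)
          · exact hf (Fp.ecR h)
        exact Or.inr ⟨ch.head ⟨Trans.ecTauL hx', hfx, hf⟩, hfx⟩
    | ecTauR hd =>
      cases hd with
      | disjL => exact Or.inl ⟨hcb, hfc⟩
      | disjR => exact Or.inr ⟨hcb, hfc⟩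

lemma par_chain {A : Set Act} {p₂ p₃ p' : Proc Act} (hs : Stable p') :
    ∀ {u}, Relation.ReflTransGen tauStepF u p' → ∀ x, u = par A x (disj p₂ p₃) →
      (Relation.ReflTransGen tauStepF (par A x p₂) p' ∧ ¬ Fp (par A x p₂)) ∨
      (Relation.ReflTransGen tauStepF (par A x p₃) p' ∧ ¬ Fp (par A x p₃)) := by
  intro u h
  induction h using Relation.ReflTransGen.head_induction_on with
  | refl =>
    intro x hx
    subst hx
    exact absurd (Trans.parTauR Trans.disjL) (hs _)
  | head st hcb ih =>
    intro x hx
    subst hx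
    obtain ⟨htr, hfu, hfc⟩ := st
    cases htr with
    | parTauL hx' =>
      rcases ih _ rfl with ⟨ch, hf⟩ | ⟨ch, hf⟩
      · have hfx : ¬ Fp (par A x p₂) := by
          intro hF
          rcases Fp_par_iff.1 hF with h | h
          · exact hfu (Fp.parL h)
          · exact hf (Fp.parR h)
        exact Or.inl ⟨ch.head ⟨Trans.parTauL hx', hfx, hf⟩, hfx⟩
      · have hfx : ¬ Fp (par A x p₃) := by
          intro hF
          rcases Fp_par_iff.1 hF with h | h
          · exact hfu (Fp.parL h)
          · exact hf (Fp.parR h)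
        exact Or.inr ⟨ch.head ⟨Trans.parTauL hx', hfx, hf⟩, hfx⟩
    | parTauR hd =>
      cases hd with
      | disjL => exact Or.inl ⟨hcb, hfc⟩
      | disjR => exact Or.inr ⟨hcb, hfc⟩

lemma conj_chain {p₂ p₃ p' : Proc Act} (hs : Stable p') (hfp' : ¬ Fp p') :
    ∀ {u}, Relation.ReflTransGen tauStepF u p' → ∀ x, u = conj x (disj p₂ p₃) →
      (Relation.ReflTransGen tauStepF (conj x p₂) p' ∧ ¬ Fp (conj x p₂)) ∨
      (Relation.ReflTransGen tauStepF (conj x p₃) p' ∧ ¬ Fp (conj x p₃)) := by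
  intro u h
  induction h using Relation.ReflTransGen.head_induction_on with
  | refl =>
    intro x hx
    subst hx
    exact absurd (Trans.conjTauR Trans.disjL) (hs _)
  | head st hcb ih =>
    intro x hx
    subst hx
    obtain ⟨htr, hfu, hfc⟩ := st
    cases htr with
    | conjTauL hx' =>
      rcases ih _ rfl with ⟨ch, hf⟩ | ⟨ch, hf⟩
      · have hfx : ¬ Fp (conj x p₂) := by
          intro hF
          cases hF with
          | conjL h => exact hfu (Fp.conjL h)
          | conjR h => exact hf (Fp.conjR h)
          | conjReady h1 h2 => exact h1 _ (Trans.conjTauL hx')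
          | conjSucc htr2 hall =>
            rename_i α s
            cases α with
            | tau => exact hf (hall _ (Trans.conjTauL hx'))
            | act a => exact noActTau (Trans.conjTauL hx') htr2
          | conjStable hall =>
            exact hfp' (hall p'
              (Relation.ReflTransGen.head (Trans.conjTauL hx') (plainChain ch)) hs)
        exact Or.inl ⟨ch.head ⟨Trans.conjTauL hx', hfx, hf⟩, hfx⟩
      · have hfx : ¬ Fp (conj x p₃) := by
          intro hF
          cases hF with
          | conjL h => exact hfu (Fp.conjL h)
          | conjR h => exact hf (Fp.conjR h)
          | conjReady h1 h2 => exact h1 _ (Trans.conjTauL hx')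
          | conjSucc htr2 hall =>
            rename_i α s
            cases α with
            | tau => exact hf (hall _ (Trans.conjTauL hx'))
            | act a => exact noActTau (Trans.conjTauL hx') htr2
          | conjStable hall =>
            exact hfp' (hall p'
              (Relation.ReflTransGen.head (Trans.conjTauL hx') (plainChain ch)) hs)
        exact Or.inr ⟨ch.head ⟨Trans.conjTauL hx', hfx, hf⟩, hfx⟩
    | conjTauR hd =>
      cases hd with
      | disjL => exact Or.inl ⟨hcb, hfc⟩
      | disjR => exact Or.inr ⟨hcb, hfc⟩


/-- Distributivity over disjunction up to =_RS. -/
theorem stmt7 {Act : Type} (p₁ p₂ p₃ : Proc Act) (A : Set Act) :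
    rsEq (ec p₁ (disj p₂ p₃)) (disj (ec p₁ p₂) (ec p₁ p₃)) ∧
    rsEq (par A p₁ (disj p₂ p₃)) (disj (par A p₁ p₂) (par A p₁ p₃)) ∧
    rsEq (conj p₁ (disj p₂ p₃)) (disj (conj p₁ p₂) (conj p₁ p₃)) := by
  refine ⟨⟨?_, ?_⟩, ⟨?_, ?_⟩, ⟨?_, ?_⟩⟩
  -- ec forward
  · apply rsLE_of_forall
    rintro p' ⟨ch, hft, hfp', hst⟩
    rcases ec_chain hst ch p₁ rfl with ⟨ch2, hf2⟩ | ⟨ch2, hf2⟩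
    · have hfs : ¬ Fp (disj (ec p₁ p₂) (ec p₁ p₃)) := fun h => hf2 (Fp_disj_iff.1 h).1
      exact ⟨ch2.head ⟨Trans.disjL, hfs, hf2⟩, hfs, hfp', hst⟩
    · have hfs : ¬ Fp (disj (ec p₁ p₂) (ec p₁ p₃)) := fun h => hf2 (Fp_disj_iff.1 h).2
      exact ⟨ch2.head ⟨Trans.disjR, hfs, hf2⟩, hfs, hfp', hst⟩
  -- ec backward
  · apply rsLE_of_forall
    rintro p' ⟨ch, hfs, hfp', hst⟩
    rcases ch.cases_head with rfl | ⟨w, st, ch2⟩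
    · exact absurd Trans.disjL (hst _)
    · obtain ⟨htr, _, hfw⟩ := st
      cases htr with
      | disjL =>
        have hft : ¬ Fp (ec p₁ (disj p₂ p₃)) := by
          intro h
          rcases Fp_ec_iff.1 h with h | h
          · exact hfw (Fp.ecL h)
          · exact hfw (Fp.ecR (Fp_disj_iff.1 h).1)
        exact ⟨ch2.head ⟨Trans.ecTauR Trans.disjL, hft, hfw⟩, hft, hfp', hst⟩
      | disjR =>
        have hft : ¬ Fp (ec p₁ (disj p₂ p₃)) := by
          intro h
          rcases Fp_ec_iff.1 h with h | h
          · exact hfw (Fp.ecL h)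
          · exact hfw (Fp.ecR (Fp_disj_iff.1 h).2)
        exact ⟨ch2.head ⟨Trans.ecTauR Trans.disjR, hft, hfw⟩, hft, hfp', hst⟩
  -- par forward
  · apply rsLE_of_forall
    rintro p' ⟨ch, hft, hfp', hst⟩
    rcases par_chain hst ch p₁ rfl with ⟨ch2, hf2⟩ | ⟨ch2, hf2⟩
    · have hfs : ¬ Fp (disj (par A p₁ p₂) (par A p₁ p₃)) :=
        fun h => hf2 (Fp_disj_iff.1 h).1
      exact ⟨ch2.head ⟨Trans.disjL, hfs, hf2⟩, hfs, hfp', hst⟩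
    · have hfs : ¬ Fp (disj (par A p₁ p₂) (par A p₁ p₃)) :=
        fun h => hf2 (Fp_disj_iff.1 h).2
      exact ⟨ch2.head ⟨Trans.disjR, hfs, hf2⟩, hfs, hfp', hst⟩
  -- par backward
  · apply rsLE_of_forall
    rintro p' ⟨ch, hfs, hfp', hst⟩
    rcases ch.cases_head with rfl | ⟨w, st, ch2⟩
    · exact absurd Trans.disjL (hst _)
    · obtain ⟨htr, _, hfw⟩ := st
      cases htr with
      | disjL =>
        have hft : ¬ Fp (par A p₁ (disj p₂ p₃)) := by
          intro h
          rcases Fp_par_iff.1 h with h | h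
          · exact hfw (Fp.parL h)
          · exact hfw (Fp.parR (Fp_disj_iff.1 h).1)
        exact ⟨ch2.head ⟨Trans.parTauR Trans.disjL, hft, hfw⟩, hft, hfp', hst⟩
      | disjR =>
        have hft : ¬ Fp (par A p₁ (disj p₂ p₃)) := by
          intro h
          rcases Fp_par_iff.1 h with h | h
          · exact hfw (Fp.parL h)
          · exact hfw (Fp.parR (Fp_disj_iff.1 h).2)
        exact ⟨ch2.head ⟨Trans.parTauR Trans.disjR, hft, hfw⟩, hft, hfp', hst⟩
  -- conj forward
  · apply rsLE_of_forall
    rintro p' ⟨ch, hft, hfp', hst⟩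
    rcases conj_chain hst hfp' ch p₁ rfl with ⟨ch2, hf2⟩ | ⟨ch2, hf2⟩
    · have hfs : ¬ Fp (disj (conj p₁ p₂) (conj p₁ p₃)) :=
        fun h => hf2 (Fp_disj_iff.1 h).1
      exact ⟨ch2.head ⟨Trans.disjL, hfs, hf2⟩, hfs, hfp', hst⟩
    · have hfs : ¬ Fp (disj (conj p₁ p₂) (conj p₁ p₃)) :=
        fun h => hf2 (Fp_disj_iff.1 h).2
      exact ⟨ch2.head ⟨Trans.disjR, hfs, hf2⟩, hfs, hfp', hst⟩
  -- conj backward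
  · apply rsLE_of_forall
    rintro p' ⟨ch, hfs, hfp', hst⟩
    rcases ch.cases_head with rfl | ⟨w, st, ch2⟩
    · exact absurd Trans.disjL (hst _)
    · obtain ⟨htr, _, hfw⟩ := st
      cases htr with
      | disjL =>
        have hft : ¬ Fp (conj p₁ (disj p₂ p₃)) := by
          intro h
          cases h with
          | conjL h => exact hfw (Fp.conjL h)
          | conjR h => exact hfw (Fp.conjR (Fp_disj_iff.1 h).1)
          | conjReady h1 h2 => exact h1 _ (Trans.conjTauR Trans.disjL)
          | conjSucc htr2 hall =>
            rename_i α s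
            cases α with
            | tau => exact hfw (hall _ (Trans.conjTauR Trans.disjL))
            | act a => exact noActTau (Trans.conjTauR Trans.disjL) htr2
          | conjStable hall =>
            exact hfp' (hall p'
              (Relation.ReflTransGen.head (Trans.conjTauR Trans.disjL)
                (plainChain ch2)) hst)
        exact ⟨ch2.head ⟨Trans.conjTauR Trans.disjL, hft, hfw⟩, hft, hfp', hst⟩
      | disjR =>
        have hft : ¬ Fp (conj p₁ (disj p₂ p₃)) := by
          intro h
          cases h with
          | conjL h => exact hfw (Fp.conjL h)
          | conjR h => exact hfw (Fp.conjR (Fp_disj_iff.1 h).2)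
          | conjReady h1 h2 => exact h1 _ (Trans.conjTauR Trans.disjR)
          | conjSucc htr2 hall =>
            rename_i α s
            cases α with
            | tau => exact hfw (hall _ (Trans.conjTauR Trans.disjR))
            | act a => exact noActTau (Trans.conjTauR Trans.disjR) htr2
          | conjStable hall =>
            exact hfp' (hall p'
              (Relation.ReflTransGen.head (Trans.conjTauR Trans.disjR)
                (plainChain ch2)) hst)
        exact ⟨ch2.head ⟨Trans.conjTauR Trans.disjR, hft, hfw⟩, hft, hfp', hst⟩


end Proc
end

section
/- For each a ∈ Act and all processes p₁, p₂ of the recursion-free calculus CLL: a.(p₁ ∨ p₂) ⊑_RS a.p₁ □ a.p₂ if and only if p₁ and p₂ are uniform w.r.t. F (i.e., p₁ ∈ F if and only if p₂ ∈ F). -/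
open Classical

namespace Proc

variable {Act : Type}

lemma stable_pre_act (a : Act) (t : Proc Act) : Stable (pre (ActT.act a) t) := by
  intro q h; cases h

lemma stable_R (a : Act) (p₁ p₂ : Proc Act) :
    Stable (ec (pre (ActT.act a) p₁) (pre (ActT.act a) p₂)) := by
  intro q h
  cases h with
  | ecTauL h => exact stable_pre_act a p₁ _ h
  | ecTauR h => exact stable_pre_act a p₂ _ h

lemma fp_pre {α : ActT Act} {t : Proc Act} (h : Fp (pre α t)) : Fp t := by
  cases h; assumption

lemma fp_disj {t₁ t₂ : Proc Act} (h : Fp (disj t₁ t₂)) : Fp t₁ ∧ Fp t₂ := by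
  cases h; exact ⟨‹_›, ‹_›⟩

lemma chain_stable {p q : Proc Act} (hs : Stable p)
    (h : Relation.ReflTransGen (tauStepF (Act := Act)) p q) : q = p := by
  rcases h.cases_head with heq | ⟨c, hc, _⟩
  · exact heq.symm
  · exact absurd hc.1 (hs c)

lemma ready_L (a : Act) (t : Proc Act) :
    ready (pre (ActT.act a) t) = {ActT.act a} := by
  ext α
  constructor
  · rintro ⟨q, h⟩; cases h; rfl
  · rintro rfl; exact ⟨t, Trans.pre⟩

lemma no_tau_pre_act (a : Act) (t : Proc Act) : ¬ hasTau (pre (ActT.act a) t) := by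
  simp [hasTau]

lemma ready_R (a : Act) (p₁ p₂ : Proc Act) :
    ready (ec (pre (ActT.act a) p₁) (pre (ActT.act a) p₂)) = {ActT.act a} := by
  ext α
  constructor
  · rintro ⟨q, h⟩
    cases h with
    | ecL h _ => cases h; rfl
    | ecR _ h => cases h; rfl
    | ecTauL h => cases h
    | ecTauR h => cases h
  · rintro rfl
    exact ⟨p₁, Trans.ecL Trans.pre (no_tau_pre_act a p₂)⟩

/-- a.(p₁ ∨ p₂) ⊑_RS a.p₁ □ a.p₂ iff p₁ and p₂ are uniform w.r.t. F. -/
theorem stmt9 {Act : Type} (a : Act) (p₁ p₂ : Proc Act) :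
    rsLE (pre (ActT.act a) (disj p₁ p₂)) (ec (pre (ActT.act a) p₁) (pre (ActT.act a) p₂)) ↔
      (Fp p₁ ↔ Fp p₂) := by
  constructor
  · intro h
    by_contra hne
    have hL : ¬ Fp (pre (ActT.act a) (disj p₁ p₂)) := by
      intro hF
      have hd := fp_disj (fp_pre hF)
      exact hne ⟨fun _ => hd.2, fun _ => hd.1⟩
    obtain ⟨q', hq', -⟩ :=
      h _ ⟨Relation.ReflTransGen.refl, hL, hL, stable_pre_act a _⟩
    have hR : Fp (ec (pre (ActT.act a) p₁) (pre (ActT.act a) p₂)) := by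
      rcases Classical.em (Fp p₁) with h1 | h1
      · exact Fp.ecL (Fp.pre h1)
      · rcases Classical.em (Fp p₂) with h2 | h2
        · exact Fp.ecR (Fp.pre h2)
        · exact absurd (iff_of_false h1 h2) hne
    exact hq'.2.1 hR
  · intro huni p' hp'
    by_cases h1 : Fp p₁
    · exact absurd (Fp.pre (Fp.disj h1 (huni.mp h1))) hp'.2.1
    · have h2 : ¬ Fp p₂ := fun h => h1 (huni.mpr h)
      have hp'eq : p' = pre (ActT.act a) (disj p₁ p₂) :=
        chain_stable (stable_pre_act a _) hp'.1
      subst hp'eq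
      have hRnF : ¬ Fp (ec (pre (ActT.act a) p₁) (pre (ActT.act a) p₂)) := by
        intro h
        cases h with
        | ecL h => exact h1 (fp_pre h)
        | ecR h => exact h2 (fp_pre h)
      refine ⟨_, ⟨Relation.ReflTransGen.refl, hRnF, hRnF, stable_R a p₁ p₂⟩, ?_⟩
      refine ⟨fun p q =>
          (p = pre (ActT.act a) (disj p₁ p₂) ∧
            q = ec (pre (ActT.act a) p₁) (pre (ActT.act a) p₂)) ∨
          (p = q ∧ Stable p), ?_, Or.inl ⟨rfl, rfl⟩⟩
      intro p q hpq
      rcases hpq with ⟨rfl, rfl⟩ | ⟨rfl, hs⟩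
      · refine ⟨stable_pre_act a _, stable_R a p₁ p₂, fun _ => hRnF, ?_,
          fun _ => by rw [ready_L, ready_R]⟩
        intro b pp hw
        obtain ⟨r, s, hchain1, hnFL, hnFr, htr, hnFs, hchain2, hnFpp, hstpp⟩ := hw
        have hr : r = pre (ActT.act a) (disj p₁ p₂) :=
          chain_stable (stable_pre_act a _) hchain1
        subst hr
        cases htr with
        | pre =>
          rcases hchain2.cases_head with heq | ⟨c, hstep, hrest⟩
          · subst heq
            exact absurd Trans.disjL (hstpp p₁)
          · have hnc : ¬ Fp c := hstep.2.2
            cases hstep.1 with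
            | disjL =>
              exact ⟨pp, ⟨_, p₁, Relation.ReflTransGen.refl, hRnF, hRnF,
                Trans.ecL Trans.pre (no_tau_pre_act a p₂), hnc, hrest, hnFpp, hstpp⟩,
                Or.inr ⟨rfl, hstpp⟩⟩
            | disjR =>
              exact ⟨pp, ⟨_, p₂, Relation.ReflTransGen.refl, hRnF, hRnF,
                Trans.ecR (no_tau_pre_act a p₁) Trans.pre, hnc, hrest, hnFpp, hstpp⟩,
                Or.inr ⟨rfl, hstpp⟩⟩
      · refine ⟨hs, hs, fun h => h, ?_, fun _ => rfl⟩
        intro b pp hw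
        obtain ⟨r, s, c1, c2, c3, c4, c5, c6, c7, c8⟩ := hw
        exact ⟨pp, ⟨r, s, c1, c2, c3, c4, c5, c6, c7, c8⟩, Or.inr ⟨rfl, c8⟩⟩

end Proc
end

section
/- Let a_i, b_j ∈ Act for each i < n and j < m. (1) If {a_i : i < n} ≠ {b_j : j < m} then □_{i<n} a_i.p_i ∧ □_{j<m} b_j.q_j =_RS ⊥. (2) □_{i<n} a_i.(p_i ∧ q_i) ⊑_RS (□_{i<n} a_i.p_i) ∧ (□_{i<n} a_i.q_i). -/
open Classical

namespace Proc

section Aux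

variable {Act : Type}

lemma hasTau_of_trans {p q : Proc Act} {α : ActT Act}
    (h : Trans p α q) (hτ : α = ActT.tau) : hasTau p := by
  induction h <;> simp_all [hasTau]

lemma stable_of_not_hasTau {p : Proc Act} (h : ¬ hasTau p) : Stable p :=
  fun q ht => h (hasTau_of_trans ht rfl)

lemma trans_ec_iff {t₁ t₂ q : Proc Act} {a : Act}
    (h₁ : ¬ hasTau t₁) (h₂ : ¬ hasTau t₂) :
    Trans (ec t₁ t₂) (ActT.act a) q ↔
      Trans t₁ (ActT.act a) q ∨ Trans t₂ (ActT.act a) q := by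
  constructor
  · intro h; cases h with
    | ecL h _ => exact Or.inl h
    | ecR _ h => exact Or.inr h
  · rintro (h | h)
    · exact Trans.ecL h h₂
    · exact Trans.ecR h₁ h

lemma hasTau_foldl (ts : List (Proc Act)) (acc : Proc Act)
    (ha : ¬ hasTau acc) (hts : ∀ t ∈ ts, ¬ hasTau t) :
    ¬ hasTau (ts.foldl ec acc) := by
  induction ts generalizing acc with
  | nil => exact ha
  | cons t ts ih =>
    exact ih (ec acc t)
      (fun h => h.elim ha (hts t List.mem_cons_self))
      (fun u hu => hts u (List.mem_cons_of_mem _ hu))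

lemma trans_foldl_iff (ts : List (Proc Act)) (acc : Proc Act) {a : Act} {q : Proc Act}
    (ha : ¬ hasTau acc) (hts : ∀ t ∈ ts, ¬ hasTau t) :
    Trans (ts.foldl ec acc) (ActT.act a) q ↔
      Trans acc (ActT.act a) q ∨ ∃ t ∈ ts, Trans t (ActT.act a) q := by
  induction ts generalizing acc with
  | nil => simp
  | cons t ts ih =>
    have h₂ : ¬ hasTau t := hts t List.mem_cons_self
    rw [List.foldl_cons,
      ih (ec acc t) (fun h => h.elim ha h₂) (fun u hu => hts u (List.mem_cons_of_mem _ hu)),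
      trans_ec_iff ha h₂]
    simp only [List.mem_cons]
    constructor
    · rintro ((h | h) | ⟨u, hu, h⟩)
      · exact Or.inl h
      · exact Or.inr ⟨t, Or.inl rfl, h⟩
      · exact Or.inr ⟨u, Or.inr hu, h⟩
    · rintro (h | ⟨u, (rfl | hu), h⟩)
      · exact Or.inl (Or.inl h)
      · exact Or.inl (Or.inr h)
      · exact Or.inr ⟨u, hu, h⟩

lemma not_hasTau_ecPre (l : List (Act × Proc Act)) : ¬ hasTau (ecPre l) := by
  cases l with
  | nil => simp [ecPre, ecList, hasTau]
  | cons x xs =>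
    show ¬ hasTau (List.foldl ec _ _)
    apply hasTau_foldl
    · simp [hasTau]
    · intro t ht
      simp only [List.mem_map] at ht
      obtain ⟨y, _, rfl⟩ := ht
      simp [hasTau]

lemma stable_ecPre (l : List (Act × Proc Act)) : Stable (ecPre l) :=
  stable_of_not_hasTau (not_hasTau_ecPre l)

lemma trans_pre_iff {α β : ActT Act} {t q : Proc Act} :
    Trans (pre α t) β q ↔ β = α ∧ q = t := by
  constructor
  · intro h; cases h; exact ⟨rfl, rfl⟩
  · rintro ⟨rfl, rfl⟩; exact Trans.pre

lemma trans_ecPre_iff (l : List (Act × Proc Act)) {a : Act} {q : Proc Act} :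
    Trans (ecPre l) (ActT.act a) q ↔ (a, q) ∈ l := by
  cases l with
  | nil =>
    simp only [ecPre, ecList, List.map_nil, List.not_mem_nil, iff_false]
    intro h; cases h
  | cons x xs =>
    show Trans (List.foldl ec _ _) _ _ ↔ _
    rw [trans_foldl_iff _ _ (by simp [hasTau])
      (by intro t ht; simp only [List.mem_map] at ht; obtain ⟨y, _, rfl⟩ := ht; simp [hasTau])]
    simp only [List.mem_map, List.mem_cons]
    constructor
    · rintro (hx | ⟨t, ⟨y, hy, rfl⟩, ht⟩)
      · obtain ⟨h1, rfl⟩ := trans_pre_iff.mp hx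
        obtain ⟨b, t⟩ := x
        cases ActT.act.inj h1
        exact Or.inl rfl
      · obtain ⟨h1, rfl⟩ := trans_pre_iff.mp ht
        obtain ⟨b, t⟩ := y
        cases ActT.act.inj h1
        exact Or.inr hy
    · rintro (rfl | h)
      · exact Or.inl Trans.pre
      · exact Or.inr ⟨pre (ActT.act a) q, ⟨(a, q), h, rfl⟩, Trans.pre⟩

lemma ready_ecPre (l : List (Act × Proc Act)) :
    ready (ecPre l) = {α | ∃ x ∈ l, α = ActT.act x.1} := by
  ext α
  simp only [ready, Set.mem_setOf_eq]
  constructor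
  · rintro ⟨q, hq⟩
    cases α with
    | tau => exact absurd hq (stable_ecPre l q)
    | act a =>
      rw [trans_ecPre_iff] at hq
      exact ⟨(a, q), hq, rfl⟩
  · rintro ⟨⟨a, t⟩, hm, rfl⟩
    exact ⟨t, (trans_ecPre_iff l).mpr hm⟩

lemma fp_ec_iff {t₁ t₂ : Proc Act} : Fp (ec t₁ t₂) ↔ Fp t₁ ∨ Fp t₂ := by
  constructor
  · intro h; cases h with
    | ecL h => exact Or.inl h
    | ecR h => exact Or.inr h
  · rintro (h | h)
    · exact Fp.ecL h
    · exact Fp.ecR h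

lemma fp_pre_iff {α : ActT Act} {t : Proc Act} : Fp (pre α t) ↔ Fp t := by
  constructor
  · intro h; cases h; assumption
  · exact Fp.pre

lemma not_fp_nil : ¬ Fp (nil : Proc Act) := by intro h; cases h

lemma fp_foldl_iff (ts : List (Proc Act)) (acc : Proc Act) :
    Fp (ts.foldl ec acc) ↔ Fp acc ∨ ∃ t ∈ ts, Fp t := by
  induction ts generalizing acc with
  | nil => simp
  | cons t ts ih =>
    rw [List.foldl_cons, ih, fp_ec_iff]
    simp only [List.mem_cons]
    constructor
    · rintro ((h | h) | ⟨u, hu, h⟩)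
      · exact Or.inl h
      · exact Or.inr ⟨t, Or.inl rfl, h⟩
      · exact Or.inr ⟨u, Or.inr hu, h⟩
    · rintro (h | ⟨u, (rfl | hu), h⟩)
      · exact Or.inl (Or.inl h)
      · exact Or.inl (Or.inr h)
      · exact Or.inr ⟨u, hu, h⟩

lemma fp_ecPre_iff (l : List (Act × Proc Act)) :
    Fp (ecPre l) ↔ ∃ x ∈ l, Fp x.2 := by
  cases l with
  | nil => simp [ecPre, ecList, not_fp_nil]
  | cons x xs =>
    show Fp (List.foldl ec _ _) ↔ _
    rw [fp_foldl_iff]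
    simp only [List.mem_map, List.mem_cons, fp_pre_iff]
    constructor
    · rintro (h | ⟨t, ⟨y, hy, rfl⟩, h⟩)
      · exact ⟨x, Or.inl rfl, h⟩
      · exact ⟨y, Or.inr hy, by rwa [fp_pre_iff] at h⟩
    · rintro ⟨y, (rfl | hy), h⟩
      · exact Or.inl h
      · exact Or.inr ⟨pre (ActT.act y.1) y.2, ⟨y, hy, rfl⟩, fp_pre_iff.mpr h⟩

lemma eq_of_stable_rtg {p q : Proc Act} (hs : Stable p)
    (h : Relation.ReflTransGen tauStepF p q) : q = p := by
  rcases Relation.ReflTransGen.cases_head h with rfl | ⟨c, hc, _⟩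
  · rfl
  · exact absurd hc.1 (hs c)

/-- The key lemma: inconsistency of the conjunction implies inconsistency of
the combined external choice. -/
lemma key_fp (l : List (Act × Proc Act × Proc Act))
    (h : Fp (conj (ecPre (l.map fun x => (x.1, x.2.1)))
                  (ecPre (l.map fun x => (x.1, x.2.2))))) :
    Fp (ecPre (l.map fun x => (x.1, conj x.2.1 x.2.2))) := by
  set e₁ := ecPre (l.map fun x => (x.1, x.2.1)) with he₁
  set e₂ := ecPre (l.map fun x => (x.1, x.2.2)) with he₂
  have hst₁ : ¬ hasTau e₁ := not_hasTau_ecPre _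
  have hst₂ : ¬ hasTau e₂ := not_hasTau_ecPre _
  have main : ∀ Q : Proc Act, Fp Q → Q = conj e₁ e₂ →
      Fp (ecPre (l.map fun x => (x.1, conj x.2.1 x.2.2))) := by
    intro Q hQ
    induction hQ with
    | bot => intro he; exact absurd he (by simp)
    | pre _ _ => intro he; exact absurd he (by simp)
    | disj _ _ _ _ => intro he; exact absurd he (by simp)
    | ecL _ _ => intro he; exact absurd he (by simp)
    | ecR _ _ => intro he; exact absurd he (by simp)
    | parL _ _ => intro he; exact absurd he (by simp)
    | parR _ _ => intro he; exact absurd he (by simp)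
    | conjL h _ =>
      intro he
      injection he with h1 h2
      subst h1; subst h2
      rw [he₁, fp_ecPre_iff] at h
      obtain ⟨x, hx, hfx⟩ := h
      simp only [List.mem_map] at hx
      obtain ⟨z, hz, rfl⟩ := hx
      rw [fp_ecPre_iff]
      exact ⟨(z.1, conj z.2.1 z.2.2), List.mem_map.mpr ⟨z, hz, rfl⟩, Fp.conjL hfx⟩
    | conjR h _ =>
      intro he
      injection he with h1 h2
      subst h1; subst h2
      rw [he₂, fp_ecPre_iff] at h
      obtain ⟨x, hx, hfx⟩ := h
      simp only [List.mem_map] at hx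
      obtain ⟨z, hz, rfl⟩ := hx
      rw [fp_ecPre_iff]
      exact ⟨(z.1, conj z.2.1 z.2.2), List.mem_map.mpr ⟨z, hz, rfl⟩, Fp.conjR hfx⟩
    | conjReady _ hne =>
      intro he
      injection he with h1 h2
      subst h1; subst h2
      exfalso
      apply hne
      rw [he₁, he₂, ready_ecPre, ready_ecPre]
      ext α
      simp only [Set.mem_setOf_eq, List.mem_map]
      constructor
      · rintro ⟨x, ⟨z, hz, rfl⟩, rfl⟩
        exact ⟨(z.1, z.2.2), ⟨z, hz, rfl⟩, rfl⟩
      · rintro ⟨x, ⟨z, hz, rfl⟩, rfl⟩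
        exact ⟨(z.1, z.2.1), ⟨z, hz, rfl⟩, rfl⟩
    | @conjSucc t₁ t₂ α s htr hall _ =>
      intro he
      injection he with h1 h2
      subst h1; subst h2
      cases htr with
      | conjTauL h => exact absurd (hasTau_of_trans h rfl) hst₁
      | conjTauR h => exact absurd (hasTau_of_trans h rfl) hst₂
      | @conjAct _ a _ x y hx hy =>
        rw [he₁, trans_ecPre_iff] at hx
        simp only [List.mem_map] at hx
        obtain ⟨z, hz, hzeq⟩ := hx
        have hza : z.1 = a := congrArg Prod.fst hzeq
        have hfd : Fp (conj z.2.1 z.2.2) := by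
          apply hall
          apply Trans.conjAct
          · rw [he₁, trans_ecPre_iff]
            exact List.mem_map.mpr ⟨z, hz, by rw [hza]⟩
          · rw [he₂, trans_ecPre_iff]
            exact List.mem_map.mpr ⟨z, hz, by rw [hza]⟩
        rw [fp_ecPre_iff]
        exact ⟨(z.1, conj z.2.1 z.2.2), List.mem_map.mpr ⟨z, hz, rfl⟩, hfd⟩
    | @conjStable t₁ t₂ hall ih =>
      intro he
      exact ih (conj t₁ t₂) Relation.ReflTransGen.refl
        (by rw [he]; exact stable_of_not_hasTau (fun h => h.elim hst₁ hst₂)) he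
  exact main _ h rfl

end Aux

/-- Interaction of general external choice with conjunction. -/
theorem stmt10 {Act : Type} :
    -- (1) distinct prefix sets yield inconsistency
    (∀ l₁ l₂ : List (Act × Proc Act),
      {a | a ∈ l₁.map Prod.fst} ≠ {a | a ∈ l₂.map Prod.fst} →
      rsEq (conj (ecPre l₁) (ecPre l₂)) bot) ∧
    -- (2)
    (∀ l : List (Act × Proc Act × Proc Act),
      rsLE (ecPre (l.map fun x => (x.1, conj x.2.1 x.2.2)))
           (conj (ecPre (l.map fun x => (x.1, x.2.1)))
                 (ecPre (l.map fun x => (x.1, x.2.2))))) := by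
  constructor
  · -- part (1)
    intro l₁ l₂ hne
    have hF : Fp (conj (ecPre l₁) (ecPre l₂)) := by
      apply Fp.conjReady
      · exact stable_of_not_hasTau
          (fun h => h.elim (not_hasTau_ecPre l₁) (not_hasTau_ecPre l₂))
      · intro heq
        apply hne
        rw [ready_ecPre, ready_ecPre] at heq
        ext a
        simp only [Set.mem_setOf_eq, List.mem_map]
        constructor
        · rintro ⟨x, hx, rfl⟩
          have : ActT.act x.1 ∈ {α | ∃ y ∈ l₂, α = ActT.act y.1} := by
            rw [← heq]; exact ⟨x, hx, rfl⟩
          obtain ⟨y, hy, hay⟩ := this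
          exact ⟨y, hy, ActT.act.inj hay.symm⟩
        · rintro ⟨x, hx, rfl⟩
          have : ActT.act x.1 ∈ {α | ∃ y ∈ l₁, α = ActT.act y.1} := by
            rw [heq]; exact ⟨x, hx, rfl⟩
          obtain ⟨y, hy, hay⟩ := this
          exact ⟨y, hy, ActT.act.inj hay.symm⟩
    constructor
    · rintro p' ⟨_, hnF, _⟩
      exact absurd hF hnF
    · rintro p' ⟨_, hnF, _⟩
      exact absurd Fp.bot hnF
  · -- part (2)
    intro l
    set P := ecPre (l.map fun x => (x.1, conj x.2.1 x.2.2)) with hP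
    set e₁ := ecPre (l.map fun x => (x.1, x.2.1)) with he₁
    set e₂ := ecPre (l.map fun x => (x.1, x.2.2)) with he₂
    set Q := conj e₁ e₂ with hQ
    have hstP : Stable P := stable_ecPre _
    have hstQ : Stable Q :=
      stable_of_not_hasTau (fun h => h.elim (not_hasTau_ecPre _) (not_hasTau_ecPre _))
    rintro p' ⟨hsteps, hnFpP, hnFp', hstp'⟩
    have hp'eq : p' = P := eq_of_stable_rtg hstP hsteps
    subst hp'eq
    have hnFpQ : ¬ Fp Q := fun h => hnFpP (key_fp l h)
    -- ready sets coincide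
    have hready : ready P = ready Q := by
      ext α
      simp only [ready, Set.mem_setOf_eq]
      constructor
      · rintro ⟨q, hq⟩
        cases α with
        | tau => exact absurd hq (hstP q)
        | act a =>
          rw [hP, trans_ecPre_iff] at hq
          simp only [List.mem_map] at hq
          obtain ⟨z, hz, hzeq⟩ := hq
          have hza : z.1 = a := congrArg Prod.fst hzeq
          refine ⟨conj z.2.1 z.2.2, Trans.conjAct ?_ ?_⟩
          · rw [he₁, trans_ecPre_iff]
            exact List.mem_map.mpr ⟨z, hz, by rw [hza]⟩
          · rw [he₂, trans_ecPre_iff]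
            exact List.mem_map.mpr ⟨z, hz, by rw [hza]⟩
      · rintro ⟨q, hq⟩
        rw [hQ] at hq
        cases hq with
        | conjTauL h => exact absurd (hasTau_of_trans h rfl) (not_hasTau_ecPre _)
        | conjTauR h => exact absurd (hasTau_of_trans h rfl) (not_hasTau_ecPre _)
        | @conjAct _ a _ x y hx hy =>
          rw [he₁, trans_ecPre_iff] at hx
          simp only [List.mem_map] at hx
          obtain ⟨z, hz, hzeq⟩ := hx
          have hza : z.1 = a := congrArg Prod.fst hzeq
          refine ⟨conj z.2.1 z.2.2, ?_⟩
          rw [hP, trans_ecPre_iff]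
          exact List.mem_map.mpr ⟨z, hz, by rw [hza]⟩
    refine ⟨Q, ⟨Relation.ReflTransGen.refl, hnFpQ, hnFpQ, hstQ⟩, ?_⟩
    refine ⟨fun u v => (u = P ∧ v = Q) ∨ (u = v ∧ Stable u), ?_, Or.inl ⟨rfl, rfl⟩⟩
    rintro u v (⟨rfl, rfl⟩ | ⟨rfl, hst⟩)
    · refine ⟨hstP, hstQ, fun _ => hnFpQ, ?_, fun _ => hready⟩
      rintro a u' ⟨r, s, hpr, _, _, hts, hns, hsq, hnq', hstu'⟩
      have hreq : r = P := eq_of_stable_rtg hstP hpr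
      subst hreq
      rw [hP, trans_ecPre_iff] at hts
      simp only [List.mem_map] at hts
      obtain ⟨z, hz, hzeq⟩ := hts
      have hza : z.1 = a := congrArg Prod.fst hzeq
      have hs' : s = conj z.2.1 z.2.2 := (congrArg Prod.snd hzeq).symm
      have htq : Trans Q (ActT.act a) s := by
        rw [hs']
        refine Trans.conjAct ?_ ?_
        · rw [he₁, trans_ecPre_iff]
          exact List.mem_map.mpr ⟨z, hz, by rw [hza]⟩
        · rw [he₂, trans_ecPre_iff]
          exact List.mem_map.mpr ⟨z, hz, by rw [hza]⟩
      exact ⟨u', ⟨Q, s, Relation.ReflTransGen.refl, hnFpQ, hnFpQ, htq, hns, hsq, hnq', hstu'⟩,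
        Or.inr ⟨rfl, hstu'⟩⟩
    · refine ⟨hst, hst, fun h => h, ?_, fun _ => rfl⟩
      rintro a u' hw
      exact ⟨u', hw, Or.inr ⟨rfl, hw.choose_spec.choose_spec.2.2.2.2.2.2.2⟩⟩

end Proc
end

section
/- If t and s are in NF_B, then there exists r ∈ NF (i.e., r ∈ NF_B or r ≡ ⊥) such that ⊢ t ∧ s = r is derivable in AX_CLL. -/
open Classical

namespace Proc


variable {Act : Type}

/-- Derivable equality in AX_CLL. -/
def DEq (t s : Proc Act) : Prop := Deriv t s ∧ Deriv s t

theorem DEq.rfl {t : Proc Act} : DEq t t := ⟨.refl t, .refl t⟩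
theorem DEq.symm {t s : Proc Act} (h : DEq t s) : DEq s t := ⟨h.2, h.1⟩
theorem DEq.trans {t s u : Proc Act} (h : DEq t s) (h' : DEq s u) : DEq t u :=
  ⟨h.1.trans h'.1, h'.2.trans h.2⟩

theorem DEq.conj_congr {a b c d : Proc Act} (h : DEq a b) (h' : DEq c d) :
    DEq (conj a c) (conj b d) := ⟨.mono_conj h.1 h'.1, .mono_conj h.2 h'.2⟩
theorem DEq.disj_congr {a b c d : Proc Act} (h : DEq a b) (h' : DEq c d) :
    DEq (disj a c) (disj b d) := ⟨.mono_disj h.1 h'.1, .mono_disj h.2 h'.2⟩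
theorem DEq.ec_congr {a b c d : Proc Act} (h : DEq a b) (h' : DEq c d) :
    DEq (ec a c) (ec b d) := ⟨.mono_ec h.1 h'.1, .mono_ec h.2 h'.2⟩
theorem DEq.pre_congr {α : ActT Act} {a b : Proc Act} (h : DEq a b) :
    DEq (pre α a) (pre α b) := ⟨.mono_pre h.1, .mono_pre h.2⟩

theorem DEq.conj_comm' {x y : Proc Act} : DEq (conj x y) (conj y x) := ⟨.conj_comm, .conj_comm⟩
theorem DEq.conj_bot {x : Proc Act} : DEq (conj x bot) bot := ⟨.conj_bot₁, .conj_bot₂⟩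
theorem DEq.ec_bot {x : Proc Act} : DEq (ec x bot) bot := ⟨.ec_bot₁, .ec_bot₂⟩
theorem DEq.ec_bot' {x : Proc Act} : DEq (ec bot x) bot :=
  DEq.trans ⟨.ec_comm, .ec_comm⟩ DEq.ec_bot
theorem DEq.disj_bot {x : Proc Act} : DEq (disj x bot) x := ⟨.disj_bot₁, .disj_bot₂⟩
theorem DEq.disj_bot' {x : Proc Act} : DEq (disj bot x) x :=
  DEq.trans ⟨.disj_comm, .disj_comm⟩ DEq.disj_bot
theorem DEq.pre_bot {a : Act} : DEq (pre (ActT.act a) (bot : Proc Act)) bot := ⟨.pre_bot₁, .pre_bot₂⟩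

theorem ec_left_comm_deriv (x y z : Proc Act) :
    Deriv (ec x (ec y z)) (ec y (ec x z)) :=
  (Deriv.ec_assoc₂).trans ((Deriv.mono_ec Deriv.ec_comm (Deriv.refl _)).trans Deriv.ec_assoc₁)

theorem DEq.ec_left_comm {x y z : Proc Act} : DEq (ec x (ec y z)) (ec y (ec x z)) :=
  ⟨ec_left_comm_deriv x y z, ec_left_comm_deriv y x z⟩

theorem ecList_foldl (l : List (Proc Act)) (a : Proc Act) :
    DEq (l.foldl ec a) (ec a (ecList l)) := by
  induction l generalizing a with
  | nil => exact ⟨.ec_nil₂, .ec_nil₁⟩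
  | cons b l ih =>
    refine (ih (ec a b)).trans ?_
    refine DEq.trans ⟨.ec_assoc₁, .ec_assoc₂⟩ ?_
    exact DEq.ec_congr DEq.rfl (ih b).symm

theorem ecList_cons (a : Proc Act) (l : List (Proc Act)) :
    DEq (ecList (a :: l)) (ec a (ecList l)) := ecList_foldl l a

theorem ecList_perm {l l' : List (Proc Act)} (h : l.Perm l') :
    DEq (ecList l) (ecList l') := by
  induction h with
  | nil => exact .rfl
  | cons a _ ih =>
    exact (ecList_cons ..).trans ((DEq.ec_congr .rfl ih).trans (ecList_cons ..).symm)
  | swap a b l =>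
    refine (ecList_cons ..).trans (DEq.trans ?_ (ecList_cons ..).symm)
    refine (DEq.ec_congr .rfl (ecList_cons ..)).trans
      (DEq.trans DEq.ec_left_comm (DEq.ec_congr .rfl (ecList_cons ..).symm))
  | trans _ _ ih1 ih2 => exact ih1.trans ih2

theorem ecPre_perm {l m : List (Act × Proc Act)} (h : l.Perm m) :
    DEq (ecPre l) (ecPre m) := ecList_perm (h.map _)

theorem djList_cons (a : Proc Act) (l : List (Proc Act)) :
    DEq (djList (a :: l)) (disj a (djList l)) := by
  have key : ∀ (l : List (Proc Act)) (a : Proc Act),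
      DEq (l.foldl disj a) (disj a (djList l)) := by
    intro l
    induction l with
    | nil => exact fun a => DEq.disj_bot.symm
    | cons b l ih =>
      intro a
      refine (ih (disj a b)).trans ?_
      refine DEq.trans ⟨.disj_assoc₂, .disj_assoc₁⟩ ?_
      exact DEq.disj_congr DEq.rfl (ih b).symm
  exact key l a

theorem djList_append (L₁ L₂ : List (Proc Act)) :
    DEq (djList (L₁ ++ L₂)) (disj (djList L₁) (djList L₂)) := by
  induction L₁ with
  | nil => exact DEq.disj_bot'.symm
  | cons a L₁ ih =>
    refine (djList_cons ..).trans ?_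
    refine (DEq.disj_congr .rfl ih).trans ?_
    refine DEq.trans ⟨.disj_assoc₁, .disj_assoc₂⟩ ?_
    exact DEq.disj_congr (djList_cons ..).symm .rfl

theorem djList_map_congr {β : Type*} (L : List β) (f g : β → Proc Act)
    (h : ∀ x ∈ L, DEq (f x) (g x)) :
    DEq (djList (L.map f)) (djList (L.map g)) := by
  induction L with
  | nil => exact .rfl
  | cons a L ih =>
    refine (djList_cons ..).trans (DEq.trans ?_ (djList_cons ..).symm)
    exact DEq.disj_congr (h a (by simp)) (ih fun x hx => h x (by simp [hx]))

theorem Deriv.disj_le' {x y : Proc Act} : Deriv y (disj x y) :=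
  (Deriv.disj_le).trans .disj_comm

theorem Deriv.disj_lub {x y z : Proc Act} (hx : Deriv x z) (hy : Deriv y z) :
    Deriv (disj x y) z :=
  (Deriv.mono_disj hx hy).trans .disj_idem₁

theorem DEq.conj_disj_dist {x y z : Proc Act} :
    DEq (conj x (disj y z)) (disj (conj x y) (conj x z)) :=
  ⟨.ds_conj, Deriv.disj_lub (.mono_conj (.refl x) .disj_le) (.mono_conj (.refl x) .disj_le')⟩

theorem conj_djList (p : Proc Act) (M : List (Proc Act)) :
    DEq (conj p (djList M)) (djList (M.map fun x => conj p x)) := by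
  induction M with
  | nil => exact DEq.conj_bot
  | cons m M ih =>
    refine (DEq.conj_congr .rfl (djList_cons ..)).trans ?_
    refine DEq.conj_disj_dist.trans ?_
    exact (DEq.disj_congr .rfl ih).trans (djList_cons ..).symm

theorem conj_djList' (L : List (Proc Act)) (q : Proc Act) :
    DEq (conj (djList L) q) (djList (L.map fun x => conj x q)) := by
  refine DEq.conj_comm'.trans ((conj_djList q L).trans ?_)
  exact djList_map_congr L _ _ (fun x _ => DEq.conj_comm')

/-- Combining a list of NF-equivalent summands into one normal form. -/
theorem combineNF (L : List (Proc Act)) (h : ∀ p ∈ L, ∃ r, NF r ∧ DEq p r) :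
    ∃ r, NF r ∧ DEq (djList L) r := by
  induction L with
  | nil => exact ⟨bot, Or.inr rfl, .rfl⟩
  | cons p L ih =>
    obtain ⟨rp, hrp, hd⟩ := h p (by simp)
    obtain ⟨rL, hrL, hdL⟩ := ih (fun q hq => h q (by simp [hq]))
    have base : DEq (djList (p :: L)) (disj rp rL) :=
      (djList_cons ..).trans (DEq.disj_congr hd hdL)
    rcases hrp with hp | hp
    · rcases hrL with hL | hL
      · cases hp with
        | mk ls₁ hne₁ hnd₁ hsb₁ =>
          cases hL with
          | mk ls₂ hne₂ hnd₂ hsb₂ =>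
            refine ⟨djList ((ls₁ ++ ls₂).map ecPre), Or.inl ?_, ?_⟩
            · refine NFB.mk (ls₁ ++ ls₂) (by simp [hne₁]) ?_ ?_
              · intro l hl
                rcases List.mem_append.mp hl with h' | h'
                · exact hnd₁ l h'
                · exact hnd₂ l h'
              · intro l hl
                rcases List.mem_append.mp hl with h' | h'
                · exact hsb₁ l h'
                · exact hsb₂ l h'
            · refine base.trans ?_
              rw [List.map_append]
              exact (djList_append ..).symm
      · subst hL
        exact ⟨rp, Or.inl hp, base.trans DEq.disj_bot⟩
    · subst hp
      exact ⟨rL, hrL, base.trans DEq.disj_bot'⟩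

/-- Normalizing the bodies of a prefixed external choice. -/
theorem ecPreNF (l : List (Act × Proc Act))
    (h : ∀ x ∈ l, ∃ r, NF r ∧ DEq x.2 r) :
    DEq (ecPre l) bot ∨
      ∃ l', l'.map Prod.fst = l.map Prod.fst ∧ (∀ x ∈ l', NFB x.2) ∧
        DEq (ecPre l) (ecPre l') := by
  induction l with
  | nil => exact Or.inr ⟨[], rfl, by simp, .rfl⟩
  | cons x l ih =>
    obtain ⟨r, hr, hd⟩ := h x (by simp)
    have hcons : DEq (ecPre (x :: l)) (ec (pre (ActT.act x.1) x.2) (ecPre l)) :=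
      ecList_cons _ _
    rcases hr with hr | hr
    · rcases ih (fun y hy => h y (by simp [hy])) with hbot | ⟨l', he, hn, hdl⟩
      · exact Or.inl (hcons.trans ((DEq.ec_congr .rfl hbot).trans DEq.ec_bot))
      · refine Or.inr ⟨(x.1, r) :: l', by simp [he], ?_, ?_⟩
        · intro y hy
          rcases List.mem_cons.mp hy with rfl | hy
          · exact hr
          · exact hn y hy
        · refine hcons.trans ?_
          refine (DEq.ec_congr (DEq.pre_congr hd) hdl).trans ?_
          exact (ecList_cons ..).symm
    · subst hr
      refine Or.inl (hcons.trans ?_)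
      refine (DEq.ec_congr (DEq.pre_congr hd) .rfl).trans ?_
      exact (DEq.ec_congr DEq.pre_bot .rfl).trans DEq.ec_bot'

theorem exists_align {β : Type} :
    ∀ (l m : List (Act × β)), (l.map Prod.fst).Nodup → (m.map Prod.fst).Nodup →
      (∀ a, a ∈ l.map Prod.fst ↔ a ∈ m.map Prod.fst) →
      ∃ m', m.Perm m' ∧ m'.map Prod.fst = l.map Prod.fst := by
  classical
  letI : DecidableEq (Act × β) := Classical.decEq _
  letI : BEq (Act × β) := instBEqOfDecidableEq
  intro l
  induction l with
  | nil =>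
    intro m _ _ hiff
    have hm : m.map Prod.fst = [] := by
      rw [List.eq_nil_iff_forall_not_mem]
      intro a ha
      simpa using (hiff a).mpr ha
    have : m = [] := by simpa using hm
    exact ⟨[], by simp [this], rfl⟩
  | cons x l ih =>
    intro m hnl hnm hiff
    have hx : x.1 ∈ m.map Prod.fst := (hiff x.1).mp (by simp)
    obtain ⟨y, hy, hy1⟩ := List.mem_map.mp hx
    have hperm : m.Perm (y :: m.erase y) := List.perm_cons_erase hy
    have hmapperm : (m.map Prod.fst).Perm (y.1 :: (m.erase y).map Prod.fst) := by
      simpa using hperm.map Prod.fst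
    have hnd2 : (y.1 :: (m.erase y).map Prod.fst).Nodup := hmapperm.nodup_iff.mp hnm
    have hxnot : x.1 ∉ l.map Prod.fst := (List.nodup_cons.mp (by simpa using hnl)).1
    have hynot : y.1 ∉ (m.erase y).map Prod.fst := (List.nodup_cons.mp hnd2).1
    have hiff' : ∀ a, a ∈ l.map Prod.fst ↔ a ∈ (m.erase y).map Prod.fst := by
      intro a
      constructor
      · intro ha
        have hne : a ≠ x.1 := fun h => hxnot (h ▸ ha)
        have ham : a ∈ m.map Prod.fst := (hiff a).mp (by simp [ha])
        rcases List.mem_cons.mp (hmapperm.mem_iff.mp ham) with h' | h'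
        · exact absurd (h'.trans hy1) hne
        · exact h'
      · intro ha
        have hne : a ≠ y.1 := fun h => hynot (h ▸ ha)
        have ham : a ∈ m.map Prod.fst := hmapperm.mem_iff.mpr (by simp [ha])
        rcases List.mem_cons.mp (by simpa only [List.map_cons] using (hiff a).mpr ham) with h' | h'
        · exact absurd (h'.trans hy1.symm) hne
        · exact h'
    obtain ⟨m'', hperm'', hmap''⟩ :=
      ih (m.erase y) (List.nodup_cons.mp (by simpa using hnl)).2
        (List.nodup_cons.mp hnd2).2 hiff'
    exact ⟨y :: m'', hperm.trans (hperm''.cons y), by simp [hmap'', hy1]⟩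

theorem zip_proj {β : Type} :
    ∀ (l m : List (Act × β)), l.map Prod.fst = m.map Prod.fst →
      (l.zip m).map (fun p => (p.1.1, p.1.2)) = l ∧
        (l.zip m).map (fun p => (p.1.1, p.2.2)) = m := by
  intro l
  induction l with
  | nil =>
    intro m h
    have : m = [] := by simpa using h.symm
    subst this; simp
  | cons x l ih =>
    intro m h
    cases m with
    | nil => simp at h
    | cons y m =>
      simp only [List.map_cons, List.cons.injEq] at h
      obtain ⟨h1, h2⟩ := h
      obtain ⟨ha, hb⟩ := ih m h2
      constructor <;> simp [ha, hb, h1]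

/-- The core pairwise case: the conjunction of two prefixed external choices. -/
theorem pairA (l m : List (Act × Proc Act))
    (hl : (l.map Prod.fst).Nodup) (hm : (m.map Prod.fst).Nodup)
    (hmN : ∀ x ∈ m, NFB x.2)
    (ih : ∀ x ∈ l, ∀ s : Proc Act, NFB s → ∃ r, NF r ∧ DEq (conj x.2 s) r) :
    ∃ r, NF r ∧ DEq (conj (ecPre l) (ecPre m)) r := by
  classical
  by_cases hset : {a | a ∈ l.map Prod.fst} = {a | a ∈ m.map Prod.fst}
  case neg => exact ⟨bot, Or.inr rfl, ⟨Deriv.ecc1₁ l m hset, Deriv.ecc1₂ l m hset⟩⟩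
  have hiff : ∀ a, a ∈ l.map Prod.fst ↔ a ∈ m.map Prod.fst := fun a => Set.ext_iff.mp hset a
  obtain ⟨m', hperm, hmap⟩ := exists_align l m hl hm hiff
  set tr : List (Act × Proc Act × Proc Act) :=
    (l.zip m').map (fun p => (p.1.1, p.1.2, p.2.2)) with htr
  obtain ⟨hp1, hp2⟩ := zip_proj l m' hmap.symm
  have e1 : tr.map (fun x => (x.1, x.2.1)) = l := by
    rw [htr, List.map_map]; exact hp1
  have e2 : tr.map (fun x => (x.1, x.2.2)) = m' := by
    rw [htr, List.map_map]; exact hp2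
  have etrfst : tr.map Prod.fst = l.map Prod.fst := by
    conv_rhs => rw [← e1, List.map_map]
    rfl
  have step1 : DEq (conj (ecPre l) (ecPre m)) (conj (ecPre l) (ecPre m')) :=
    DEq.conj_congr .rfl (ecPre_perm hperm)
  have step2 : DEq (conj (ecPre l) (ecPre m'))
      (ecPre (tr.map fun x => (x.1, conj x.2.1 x.2.2))) := by
    have h3 := Deriv.ecc3 (Act := Act) tr (by rw [etrfst]; exact hl)
    have h2 := Deriv.ecc2 (Act := Act) tr
    rw [e1, e2] at h3 h2
    exact ⟨h3, h2⟩
  have hbody : ∀ x ∈ tr.map (fun x => (x.1, conj x.2.1 x.2.2)),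
      ∃ r, NF r ∧ DEq x.2 r := by
    intro x hx
    obtain ⟨p, hp, rfl⟩ := List.mem_map.mp hx
    obtain ⟨q, hq, rfl⟩ := List.mem_map.mp hp
    obtain ⟨hql, hqm⟩ := List.of_mem_zip hq
    exact ih q.1 hql q.2.2 (hmN q.2 (hperm.mem_iff.mpr hqm))
  rcases ecPreNF _ hbody with hbot | ⟨l', hfst, hNFb, hdeq⟩
  · exact ⟨bot, Or.inr rfl, (step1.trans step2).trans hbot⟩
  · refine ⟨ecPre l', Or.inl ?_, (step1.trans step2).trans hdeq⟩
    have hnd : (l'.map Prod.fst).Nodup := by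
      rw [hfst, List.map_map]
      have : tr.map (Prod.fst ∘ fun x => (x.1, conj x.2.1 x.2.2)) = tr.map Prod.fst := rfl
      rw [this, etrfst]; exact hl
    have : NFB (djList ([l'].map ecPre)) := by
      refine NFB.mk [l'] (by simp) ?_ ?_
      · intro a ha; rw [List.mem_singleton.mp ha]; exact hnd
      · intro a ha x hx; rw [List.mem_singleton.mp ha] at hx; exact hNFb x hx
    exact this

theorem mainNF : ∀ {t : Proc Act}, NFB t → ∀ s : Proc Act, NFB s →
    ∃ r, NF r ∧ DEq (conj t s) r := by
  intro t ht
  induction ht with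
  | mk ls hne hnodup hsub ih =>
    intro s hs
    cases hs with
    | mk ls' hne' hnodup' hsub' =>
      have hstep : DEq (conj (djList (ls.map ecPre)) (djList (ls'.map ecPre)))
          (djList (ls.map fun l => conj (ecPre l) (djList (ls'.map ecPre)))) := by
        refine (conj_djList' (ls.map ecPre) _).trans ?_
        rw [List.map_map]; exact .rfl
      have helem : ∀ p ∈ ls.map (fun l => conj (ecPre l) (djList (ls'.map ecPre))),
          ∃ r, NF r ∧ DEq p r := by
        intro p hp
        obtain ⟨l, hl, rfl⟩ := List.mem_map.mp hp
        have hstep2 : DEq (conj (ecPre l) (djList (ls'.map ecPre)))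
            (djList (ls'.map fun m2 => conj (ecPre l) (ecPre m2))) := by
          refine (conj_djList _ _).trans ?_
          rw [List.map_map]; exact .rfl
        have helem2 : ∀ p ∈ ls'.map (fun m2 => conj (ecPre l) (ecPre m2)),
            ∃ r, NF r ∧ DEq p r := by
          intro p hp
          obtain ⟨m2, hm2, rfl⟩ := List.mem_map.mp hp
          exact pairA l m2 (hnodup l hl) (hnodup' m2 hm2) (hsub' m2 hm2)
            (fun x hx => ih l hl x hx)
        obtain ⟨r, hr, hd⟩ := combineNF _ helem2
        exact ⟨r, hr, hstep2.trans hd⟩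
      obtain ⟨r, hr, hd⟩ := combineNF _ helem
      exact ⟨r, hr, hstep.trans hd⟩

/-- Conjunctions of normal forms reduce in AX_CLL to a normal form. -/
theorem stmt15 {Act : Type} (t s : Proc Act) (ht : NFB t) (hs : NFB s) :
    ∃ r : Proc Act, NF r ∧ Deriv (conj t s) r ∧ Deriv r (conj t s) := by
  obtain ⟨r, hr, hd⟩ := mainNF ht s hs
  exact ⟨r, hr, hd.1, hd.2⟩

end Proc
end
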